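/- Under the mixture setup, the expected squared-multiplicative overlap-adaptive regularization function satisfies: ∫ (1/(16·(π(x)·(1−π(x)))²) − 1) dμ(x) ≤ (1/(16·π₀²·π₁²)) · sqrt(∫ ((dμ/dν₀)(x))⁴ dμ(x)) · sqrt(∫ ((dμ/dν₁)(x))⁴ dμ(x)), assuming the integrals on the right-hand side are finite. -/

import Mathlib

open MeasureTheory

/-- Proposition 1 (squared-multiplicative case): under the mixture setup, the expected
squared-multiplicative overlap-adaptive regularization function is bounded by a product
of f-divergence-type terms with fourth-power densities. -/
theorem oar_squared_multiplicative_bound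
    {X : Type*} [MeasurableSpace X]
    (ν₀ ν₁ : Measure X) [IsProbabilityMeasure ν₀] [IsProbabilityMeasure ν₁]
    (π₀ π₁ : ℝ) (hπ₀ : 0 < π₀) (hπ₀' : π₀ < 1) (hπ₁ : 0 < π₁) (hπ₁' : π₁ < 1)
    (hsum : π₀ + π₁ = 1)
    (μ : Measure X)
    (hμ : μ = ENNReal.ofReal π₀ • ν₀ + ENNReal.ofReal π₁ • ν₁)
    (hac₀ : μ ≪ ν₀) (hac₁ : μ ≪ ν₁) (hac₀' : ν₀ ≪ μ) (hac₁' : ν₁ ≪ μ)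
    (hpos₀ : ∀ᵐ x ∂μ, 0 < (ν₀.rnDeriv μ x).toReal)
    (hpos₁ : ∀ᵐ x ∂μ, 0 < (ν₁.rnDeriv μ x).toReal)
    (prop : X → ℝ)
    (hprop : ∀ᵐ x ∂μ, prop x = π₁ * (ν₁.rnDeriv μ x).toReal)
    (hprop' : ∀ᵐ x ∂μ, 1 - prop x = π₀ * (ν₀.rnDeriv μ x).toReal)
    (hint₀ : Integrable (fun x => ((μ.rnDeriv ν₀ x).toReal) ^ 4) μ)
    (hint₁ : Integrable (fun x => ((μ.rnDeriv ν₁ x).toReal) ^ 4) μ) :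
    ∫ x, (1 / (16 * (prop x * (1 - prop x)) ^ 2) - 1) ∂μ ≤
      (1 / (16 * π₀ ^ 2 * π₁ ^ 2)) *
        Real.sqrt (∫ x, ((μ.rnDeriv ν₀ x).toReal) ^ 4 ∂μ) *
        Real.sqrt (∫ x, ((μ.rnDeriv ν₁ x).toReal) ^ 4 ∂μ) := by
  have hprobμ : IsProbabilityMeasure μ := by
    constructor
    rw [hμ]
    simp [ENNReal.ofReal_add hπ₀.le hπ₁.le, ← ENNReal.ofReal_add hπ₀.le hπ₁.le, hsum]
  set g₀ : X → ℝ := fun x => (μ.rnDeriv ν₀ x).toReal with hg₀def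
  set g₁ : X → ℝ := fun x => (μ.rnDeriv ν₁ x).toReal with hg₁def
  set c : ℝ := 1 / (16 * π₀ ^ 2 * π₁ ^ 2) with hc
  have hcpos : 0 < c := by positivity
  -- a.e. identity relating (1 - prop)·prop with 1/(g₀ g₁) pieces
  have hinv₀ := Measure.inv_rnDeriv hac₀
  have hinv₁ := Measure.inv_rnDeriv hac₁
  have hlt₀ := Measure.rnDeriv_lt_top μ ν₀
  have hlt₁ := Measure.rnDeriv_lt_top μ ν₁
  have hlt₀' : ∀ᵐ x ∂μ, μ.rnDeriv ν₀ x < ⊤ := hac₀.ae_le hlt₀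
  have hlt₁' : ∀ᵐ x ∂μ, μ.rnDeriv ν₁ x < ⊤ := hac₁.ae_le hlt₁
  have key : ∀ᵐ x ∂μ, 1 / (16 * (prop x * (1 - prop x)) ^ 2) - 1
      = c * (g₀ x ^ 2 * g₁ x ^ 2) - 1 := by
    filter_upwards [hprop, hprop', hpos₀, hpos₁, hinv₀, hinv₁, hlt₀', hlt₁'] with x h1 h1' h2 h3
      h4 h5 h6 h7
    have hne₀ : ν₀.rnDeriv μ x ≠ 0 ∧ ν₀.rnDeriv μ x ≠ ⊤ := by
      constructor
      · intro h; rw [h] at h2; simp at h2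
      · intro h; rw [h] at h2; simp at h2
    have hne₁ : ν₁.rnDeriv μ x ≠ 0 ∧ ν₁.rnDeriv μ x ≠ ⊤ := by
      constructor
      · intro h; rw [h] at h3; simp at h3
      · intro h; rw [h] at h3; simp at h3
    -- g₀ x = ((ν₀.rnDeriv μ x).toReal)⁻¹
    have hg0 : g₀ x = ((ν₀.rnDeriv μ x).toReal)⁻¹ := by
      have : μ.rnDeriv ν₀ x = (ν₀.rnDeriv μ x)⁻¹ := by
        rw [← h4]; simp
      rw [hg₀def]; simp only [this]
      rw [ENNReal.toReal_inv]
    have hg1 : g₁ x = ((ν₁.rnDeriv μ x).toReal)⁻¹ := by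
      have : μ.rnDeriv ν₁ x = (ν₁.rnDeriv μ x)⁻¹ := by
        rw [← h5]; simp
      rw [hg₁def]; simp only [this]
      rw [ENNReal.toReal_inv]
    rw [h1', h1, hg0, hg1, hc]
    have h2' : (ν₀.rnDeriv μ x).toReal ≠ 0 := ne_of_gt h2
    have h3' : (ν₁.rnDeriv μ x).toReal ≠ 0 := ne_of_gt h3
    field_simp
  -- integrability of the product
  have hmeas₀ : AEStronglyMeasurable g₀ μ :=
    (Measure.measurable_rnDeriv μ ν₀).ennreal_toReal.aestronglyMeasurable
  have hmeas₁ : AEStronglyMeasurable g₁ μ :=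
    (Measure.measurable_rnDeriv μ ν₁).ennreal_toReal.aestronglyMeasurable
  have hg₀nn : ∀ x, 0 ≤ g₀ x := fun x => ENNReal.toReal_nonneg
  have hg₁nn : ∀ x, 0 ≤ g₁ x := fun x => ENNReal.toReal_nonneg
  have hprodint : Integrable (fun x => g₀ x ^ 2 * g₁ x ^ 2) μ := by
    refine Integrable.mono' ((hint₀.add hint₁).div_const 2)
      ((hmeas₀.pow 2).mul (hmeas₁.pow 2)) ?_
    filter_upwards with x
    rw [Real.norm_of_nonneg (by positivity)]
    have := sq_nonneg (g₀ x ^ 2 - g₁ x ^ 2)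
    simp only [Pi.add_apply]
    nlinarith
  -- Cauchy-Schwarz
  have hml₀ : MemLp (fun x => g₀ x ^ 2) (ENNReal.ofReal 2) μ := by
    have : (ENNReal.ofReal 2) = (2 : ENNReal) := by norm_num
    rw [this]
    have hm : AEStronglyMeasurable (fun x => g₀ x ^ 2) μ := hmeas₀.pow 2
    refine (memLp_two_iff_integrable_sq hm).mpr ?_
    convert hint₀ using 2 with x
    ring
  have hml₁ : MemLp (fun x => g₁ x ^ 2) (ENNReal.ofReal 2) μ := by
    have : (ENNReal.ofReal 2) = (2 : ENNReal) := by norm_num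
    rw [this]
    have hm : AEStronglyMeasurable (fun x => g₁ x ^ 2) μ := hmeas₁.pow 2
    refine (memLp_two_iff_integrable_sq hm).mpr ?_
    convert hint₁ using 2 with x
    ring
  have hCS : ∫ x, g₀ x ^ 2 * g₁ x ^ 2 ∂μ ≤
      Real.sqrt (∫ x, g₀ x ^ 4 ∂μ) * Real.sqrt (∫ x, g₁ x ^ 4 ∂μ) := by
    have := integral_mul_le_Lp_mul_Lq_of_nonneg (Real.holderConjugate_iff_eq_conjExponent
      (by norm_num) |>.mpr (by norm_num) : Real.HolderConjugate 2 2)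
      (Filter.Eventually.of_forall fun x => by positivity)
      (Filter.Eventually.of_forall fun x => by positivity) hml₀ hml₁
    have e₀ : ∫ x, (g₀ x ^ 2) ^ (2:ℝ) ∂μ = ∫ x, g₀ x ^ 4 ∂μ :=
      integral_congr_ae (Filter.Eventually.of_forall fun x => by
        show (g₀ x ^ 2) ^ (2:ℝ) = g₀ x ^ 4
        rw [show ((2:ℝ)) = ((2:ℕ):ℝ) by norm_num, Real.rpow_natCast]; ring)
    have e₁ : ∫ x, (g₁ x ^ 2) ^ (2:ℝ) ∂μ = ∫ x, g₁ x ^ 4 ∂μ :=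
      integral_congr_ae (Filter.Eventually.of_forall fun x => by
        show (g₁ x ^ 2) ^ (2:ℝ) = g₁ x ^ 4
        rw [show ((2:ℝ)) = ((2:ℕ):ℝ) by norm_num, Real.rpow_natCast]; ring)
    rw [e₀, e₁] at this
    rw [Real.sqrt_eq_rpow, Real.sqrt_eq_rpow]
    exact this
  -- put it together
  rw [integral_congr_ae key]
  have hintc : Integrable (fun x => c * (g₀ x ^ 2 * g₁ x ^ 2)) μ := hprodint.const_mul c
  rw [integral_sub hintc (integrable_const 1)]
  simp only [integral_const, measure_univ, probReal_univ, ENNReal.toReal_one, one_smul, smul_eq_mul, one_mul]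
  rw [integral_const_mul]
  have : c * ∫ x, g₀ x ^ 2 * g₁ x ^ 2 ∂μ ≤
      c * (Real.sqrt (∫ x, g₀ x ^ 4 ∂μ) * Real.sqrt (∫ x, g₁ x ^ 4 ∂μ)) :=
    mul_le_mul_of_nonneg_left hCS hcpos.le
  calc c * (∫ x, g₀ x ^ 2 * g₁ x ^ 2 ∂μ) - 1
      ≤ c * (Real.sqrt (∫ x, g₀ x ^ 4 ∂μ) * Real.sqrt (∫ x, g₁ x ^ 4 ∂μ)) := by linarith
    _ = c * Real.sqrt (∫ x, g₀ x ^ 4 ∂μ) * Real.sqrt (∫ x, g₁ x ^ 4 ∂μ) := by ring
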